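/- Let M ⊆ Z_{p^r}[x]^2 be the p-span of (v_1, ..., v_{2r}) where {v_1,...,v_{2r}} has the p-PLM property, and suppose j* is an index with lpos(v_{j*}) = 2 and ord(v_{j*}) = r. Then v_{j*} has minimal leading monomial among all vectors in M of order r and leading position 2, and every such minimal vector f has the form f = a v_{j*} + Σ_{i ≠ j*} a_i v_i with a a nonzero digit in A_p and a_i ∈ A_p[x] satisfying lm(a_i v_i) ≤ lm(v_{j*}). -/

import Mathlib

open Polynomial

open scoped Classical

/-- Support of a polynomial vector: monomials `(degree, position)` ordered lexicographically,
which is the term-over-position (top) ordering. -/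
noncomputable def vsupp {R : Type*} [CommRing R] {q : ℕ} (f : Fin q → R[X]) :
    Finset (Lex (ℕ × Fin q)) :=
  Finset.univ.biUnion fun i => (f i).support.image fun α => toLex (α, i)

/-- Leading monomial w.r.t. the top ordering (`⊥` for the zero vector). -/
noncomputable def vlm {R : Type*} [CommRing R] {q : ℕ} (f : Fin q → R[X]) :
    WithBot (Lex (ℕ × Fin q)) := (vsupp f).max

/-- Degree of the leading monomial (junk value `0` for the zero vector). -/
noncomputable def vdeg {R : Type*} [CommRing R] {q : ℕ} (f : Fin q → R[X]) : ℕ :=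
  WithBot.unbotD 0 ((vlm f).map fun m => (ofLex m).1)

/-- Leading position. -/
noncomputable def vlpos {R : Type*} [CommRing R] {q : ℕ} (f : Fin q → R[X]) : WithBot (Fin q) :=
  (vlm f).map fun m => (ofLex m).2

/-- Leading coefficient. -/
noncomputable def vlc {R : Type*} [CommRing R] {q : ℕ} (f : Fin q → R[X]) : R :=
  WithBot.unbotD 0 ((vlm f).map fun m => (f (ofLex m).2).coeff (ofLex m).1)

/-- `c` is a digit: one of `0,1,…,p-1` (as a ring element). -/
def IsDigit {R : Type*} [CommRing R] (p : ℕ) (c : R) : Prop := ∃ t : ℕ, t < p ∧ c = (t : R)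

/-- All coefficients of `a` are digits, i.e. `a ∈ A_p[x]`. -/
def IsDigitPoly {R : Type*} [CommRing R] (p : ℕ) (a : R[X]) : Prop := ∀ n, IsDigit p (a.coeff n)

/-- The p-span: the set of all p-linear combinations of the `v i`. -/
def pSpan {R : Type*} [CommRing R] {q : ℕ} (p : ℕ) {ι : Type*} [Fintype ι]
    (v : ι → Fin q → R[X]) : Set (Fin q → R[X]) :=
  {f | ∃ a : ι → R[X], (∀ i, IsDigitPoly p (a i)) ∧ f = ∑ i, a i • v i}

/-- p-generator sequence: `p • v i` is a p-linear combination of the later elements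
(for the last element, `p • v i = 0`). -/
def IsPGenSeq {R : Type*} [CommRing R] {q : ℕ} (p : ℕ) {ι : Type*} [Fintype ι] [LinearOrder ι]
    (v : ι → Fin q → R[X]) : Prop :=
  ∀ i : ι, ∃ a : ι → R[X], (∀ j, IsDigitPoly p (a j)) ∧ (∀ j, j ≤ i → a j = 0) ∧
    (p : R) • v i = ∑ j, a j • v j

/-- p-linear independence: only the trivial p-linear combination vanishes. -/
def PLinIndep {R : Type*} [CommRing R] {q : ℕ} (p : ℕ) {ι : Type*} [Fintype ι]
    (v : ι → Fin q → R[X]) : Prop :=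
  ∀ a : ι → R[X], (∀ i, IsDigitPoly p (a i)) → ∑ i, a i • v i = 0 → ∀ i, a i = 0

/-- The p-Predictable Leading Monomial (p-PLM) property. -/
def HasPPLM {R : Type*} [CommRing R] {q : ℕ} (p : ℕ) {ι : Type*} [Fintype ι]
    (v : ι → Fin q → R[X]) : Prop :=
  ∀ a : ι → R[X], (∀ i, IsDigitPoly p (a i)) → ∑ i, a i • v i ≠ 0 →
    vlm (∑ i, a i • v i) = (Finset.univ.filter fun i => a i ≠ 0).sup fun i => vlm (a i • v i)

section Aux
variable {R : Type*} [CommRing R] {q : ℕ}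

lemma mem_vsupp {f : Fin q → R[X]} {n : ℕ} {i : Fin q} :
    toLex (n, i) ∈ vsupp f ↔ (f i).coeff n ≠ 0 := by
  simp only [vsupp, Finset.mem_biUnion, Finset.mem_univ, true_and, Finset.mem_image,
    Polynomial.mem_support_iff]
  constructor
  · rintro ⟨j, α, hα, h⟩
    obtain ⟨h1, h2⟩ := Prod.mk.injEq .. ▸ toLex.injective h
    subst h1; subst h2; exact hα
  · intro h; exact ⟨i, n, h, rfl⟩

lemma mem_vsupp' {f : Fin q → R[X]} {m : Lex (ℕ × Fin q)} :
    m ∈ vsupp f ↔ (f (ofLex m).2).coeff (ofLex m).1 ≠ 0 :=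
  mem_vsupp (n := (ofLex m).1) (i := (ofLex m).2)

lemma vlm_eq_bot {f : Fin q → R[X]} : vlm f = ⊥ ↔ f = 0 := by
  rw [vlm, Finset.max_eq_bot]
  constructor
  · intro h
    funext i; ext n
    by_contra hc
    have : toLex (n, i) ∈ vsupp f := mem_vsupp.2 (by simpa using hc)
    simp [h] at this
  · intro h
    ext m
    simp [mem_vsupp', h]

lemma le_vlm {f : Fin q → R[X]} {n : ℕ} {i : Fin q} (h : (f i).coeff n ≠ 0) :
    (↑(toLex (n, i)) : WithBot (Lex (ℕ × Fin q))) ≤ vlm f :=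
  Finset.le_max (mem_vsupp.2 h)

lemma coeff_eq_zero_of_vlm_lt {f : Fin q → R[X]} {n : ℕ} {i : Fin q}
    (h : vlm f < (↑(toLex (n, i)) : WithBot (Lex (ℕ × Fin q)))) : (f i).coeff n = 0 := by
  by_contra hc
  exact absurd (le_vlm hc) (not_le.2 h)

lemma vlm_spec {f : Fin q → R[X]} {d : ℕ} {pos : Fin q}
    (h : vlm f = (↑(toLex (d, pos)) : WithBot (Lex (ℕ × Fin q)))) :
    (f pos).coeff d ≠ 0 ∧ d = (f pos).natDegree ∧ vlpos f = (pos : WithBot (Fin q)) ∧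
      vlc f = (f pos).coeff d := by
  have hmem : toLex (d, pos) ∈ vsupp f := Finset.mem_of_max h
  have h1 : (f pos).coeff d ≠ 0 := mem_vsupp.1 hmem
  have hf : f pos ≠ 0 := fun h0 => h1 (by simp [h0])
  have hled : d ≤ (f pos).natDegree := le_natDegree_of_ne_zero h1
  have h2 : (↑(toLex ((f pos).natDegree, pos)) : WithBot (Lex (ℕ × Fin q))) ≤ toLex (d, pos) :=
    h ▸ le_vlm (leadingCoeff_ne_zero.mpr hf)
  have hdeq : d = (f pos).natDegree := by
    rcases Prod.Lex.toLex_le_toLex.1 (WithBot.coe_le_coe.1 h2) with hlt | ⟨heq, _⟩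
    · exact absurd hled (not_le.2 hlt)
    · exact heq.symm
  refine ⟨h1, hdeq, ?_, ?_⟩
  · rw [vlpos, h]; rfl
  · rw [vlc, h]; rfl

lemma vlm_smul {a : R[X]} {v : Fin q → R[X]} {d : ℕ} {pos : Fin q}
    (ha : IsUnit a.leadingCoeff)
    (hv : vlm v = (↑(toLex (d, pos)) : WithBot (Lex (ℕ × Fin q)))) :
    vlm (a • v) = (↑(toLex (a.natDegree + d, pos)) : WithBot (Lex (ℕ × Fin q))) ∧
      vlc (a • v) = a.leadingCoeff * (v pos).coeff d := by
  obtain ⟨h1, hdeq, -, -⟩ := vlm_spec hv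
  have hsmul : ∀ i, (a • v) i = a * v i := fun i => rfl
  have htop : ((a • v) pos).coeff (a.natDegree + d) = a.leadingCoeff * (v pos).coeff d := by
    rw [hsmul, hdeq, coeff_mul_degree_add_degree]
    rfl
  have htopne : ((a • v) pos).coeff (a.natDegree + d) ≠ 0 := by
    rw [htop]
    exact fun hc => h1 ((ha.mul_right_eq_zero).1 hc)
  have hlm : vlm (a • v) = (↑(toLex (a.natDegree + d, pos)) : WithBot (Lex (ℕ × Fin q))) := by
    refine le_antisymm (Finset.max_le ?_) (le_vlm htopne)
    intro m hm
    have hc : (a * v (ofLex m).2).coeff (ofLex m).1 ≠ 0 := by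
      rw [← hsmul]; exact mem_vsupp'.1 hm
    have hvi : v (ofLex m).2 ≠ 0 := by
      intro h0
      rw [h0, mul_zero] at hc
      simp at hc
    have hn : (ofLex m).1 ≤ a.natDegree + (v (ofLex m).2).natDegree :=
      (le_natDegree_of_ne_zero hc).trans natDegree_mul_le
    have hvs : (↑(toLex ((v (ofLex m).2).natDegree, (ofLex m).2)) : WithBot (Lex (ℕ × Fin q)))
        ≤ toLex (d, pos) :=
      hv ▸ le_vlm (leadingCoeff_ne_zero.mpr hvi)
    have hvs' := Prod.Lex.toLex_le_toLex.1 (WithBot.coe_le_coe.1 hvs)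
    have hdle : (v (ofLex m).2).natDegree ≤ d := by
      rcases hvs' with h | ⟨h, -⟩
      · exact h.le
      · exact h.le
    have hn' : (ofLex m).1 ≤ a.natDegree + d := hn.trans (by omega)
    rw [WithBot.coe_le_coe]
    show toLex ((ofLex m).1, (ofLex m).2) ≤ toLex (a.natDegree + d, pos)
    rw [Prod.Lex.toLex_le_toLex]
    rcases lt_or_eq_of_le hn' with hlt | heq
    · exact Or.inl hlt
    · refine Or.inr ⟨heq, ?_⟩
      have hde : (v (ofLex m).2).natDegree = d := by omega
      rcases hvs' with h | ⟨-, h⟩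
      · omega
      · exact h
  exact ⟨hlm, by rw [(vlm_spec hlm).2.2.2, htop]⟩

end Aux

section ZModAux

variable {p r : ℕ}

lemma zmod_card_zmultiples_eq_iff (hp : p.Prime) (hr : 0 < r) (c : ZMod (p ^ r)) :
    Nat.card (AddSubgroup.zmultiples c) = p ^ r ↔ IsUnit c := by
  have hn : p ^ r ≠ 0 := pow_ne_zero _ hp.pos.ne'
  haveI : NeZero (p ^ r) := ⟨hn⟩
  have hc : ((c.val : ℕ) : ZMod (p ^ r)) = c := by
    rw [ZMod.natCast_val, ZMod.cast_id]
  rw [Nat.card_zmultiples, ← hc, ZMod.addOrderOf_coe _ hn, ZMod.isUnit_iff_coprime,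
    Nat.div_eq_self]
  constructor
  · rintro (h | h)
    · exact absurd h hn
    · rw [Nat.Coprime, Nat.gcd_comm]; exact h
  · intro h
    exact Or.inr (by rw [Nat.gcd_comm]; exact h)

lemma zmod_dvd_of_not_isUnit (hp : p.Prime) (hr : 0 < r) {c : ZMod (p ^ r)}
    (h : ¬ IsUnit c) : (p : ZMod (p ^ r)) ∣ c := by
  have hn : p ^ r ≠ 0 := pow_ne_zero _ hp.pos.ne'
  haveI : NeZero (p ^ r) := ⟨hn⟩
  have hc : ((c.val : ℕ) : ZMod (p ^ r)) = c := by
    rw [ZMod.natCast_val, ZMod.cast_id]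
  rw [← hc, ZMod.isUnit_iff_coprime] at h
  have hpd : p ∣ c.val := by
    by_contra hpd
    exact h (((hp.coprime_iff_not_dvd).2 hpd).symm.pow_right r)
  calc (p : ZMod (p ^ r)) ∣ ((c.val : ℕ) : ZMod (p ^ r)) := Nat.cast_dvd_cast hpd
    _ = c := hc

lemma zmod_not_isUnit_p (hp : p.Prime) (hr : 0 < r) : ¬ IsUnit (p : ZMod (p ^ r)) := by
  have hn : p ^ r ≠ 0 := pow_ne_zero _ hp.pos.ne'
  haveI : NeZero (p ^ r) := ⟨hn⟩
  rw [ZMod.isUnit_iff_coprime]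
  intro h
  exact hp.one_lt.ne' (h.eq_one_of_dvd (dvd_pow_self p hr.ne'))

lemma isUnit_of_digit_ne_zero (hp : p.Prime) (hr : 0 < r) {c : ZMod (p ^ r)}
    (h : IsDigit p c) (h0 : c ≠ 0) : IsUnit c := by
  have hn : p ^ r ≠ 0 := pow_ne_zero _ hp.pos.ne'
  haveI : NeZero (p ^ r) := ⟨hn⟩
  obtain ⟨t, htp, rfl⟩ := h
  have ht0 : t ≠ 0 := by rintro rfl; simp at h0
  rw [ZMod.isUnit_iff_coprime]
  exact ((hp.coprime_iff_not_dvd).2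
    (Nat.not_dvd_of_pos_of_lt (Nat.pos_of_ne_zero ht0) htp)).symm.pow_right r

lemma isUnit_leadingCoeff_of_digitPoly (hp : p.Prime) (hr : 0 < r)
    {a : Polynomial (ZMod (p ^ r))} (h : IsDigitPoly p a) (h0 : a ≠ 0) :
    IsUnit a.leadingCoeff :=
  isUnit_of_digit_ne_zero hp hr (h a.natDegree)
    (Polynomial.leadingCoeff_ne_zero.mpr h0)

end ZModAux

section Key

lemma key_decomp (p r : ℕ) (hp : p.Prime) (hr : 0 < r)
    (v : Fin (2 * r) → Fin 2 → Polynomial (ZMod (p ^ r)))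
    (hPLM : HasPPLM p v)
    (hdist : ∀ i j, i ≠ j → vlpos (v i) = vlpos (v j) →
      Nat.card (AddSubgroup.zmultiples (vlc (v i))) ≠
        Nat.card (AddSubgroup.zmultiples (vlc (v j))))
    (jstar : Fin (2 * r))
    (hjpos : vlpos (v jstar) = ((1 : Fin 2) : WithBot (Fin 2)))
    (hjord : Nat.card (AddSubgroup.zmultiples (vlc (v jstar))) = p ^ r)
    (f : Fin 2 → Polynomial (ZMod (p ^ r)))
    (hf : f ∈ pSpan p v) (hf0 : f ≠ 0)
    (hfpos : vlpos f = ((1 : Fin 2) : WithBot (Fin 2)))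
    (hford : Nat.card (AddSubgroup.zmultiples (vlc f)) = p ^ r) :
    ∃ a : Fin (2 * r) → Polynomial (ZMod (p ^ r)),
      (∀ i, IsDigitPoly p (a i)) ∧ f = ∑ i, a i • v i ∧ a jstar ≠ 0 ∧
      vlm f = vlm (a jstar • v jstar) ∧ ∀ i, a i ≠ 0 → vlm (a i • v i) ≤ vlm f := by
  obtain ⟨a, hadig, hfeq⟩ := hf
  have hsum0 : ∑ i, a i • v i ≠ 0 := hfeq ▸ hf0
  have hS := hPLM a hadig hsum0
  rw [← hfeq] at hS
  have hfne : vlm f ≠ ⊥ := fun h => hf0 (vlm_eq_bot.1 h)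
  obtain ⟨m, hm⟩ := WithBot.ne_bot_iff_exists.1 hfne
  set D := (ofLex m).1 with hD
  set pos := (ofLex m).2 with hpos
  have hmf : vlm f = (↑(toLex (D, pos)) : WithBot (Lex (ℕ × Fin 2))) := hm.symm
  have hmax : ∀ i, a i ≠ 0 → vlm (a i • v i) = vlm f →
      vlpos (v i) = vlpos f ∧
      (a i * v i pos).coeff D = (a i).leadingCoeff * vlc (v i) := by
    intro i hai heq
    have hvi : v i ≠ 0 := by
      intro h0
      rw [h0, smul_zero] at heq
      exact hfne (heq ▸ vlm_eq_bot.2 rfl)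
    have hvne : vlm (v i) ≠ ⊥ := fun h => hvi (vlm_eq_bot.1 h)
    obtain ⟨m', hm'⟩ := WithBot.ne_bot_iff_exists.1 hvne
    have hv : vlm (v i) = (↑(toLex ((ofLex m').1, (ofLex m').2)) : WithBot (Lex (ℕ × Fin 2))) :=
      hm'.symm
    have hu := isUnit_leadingCoeff_of_digitPoly hp hr (hadig i) hai
    obtain ⟨hlm, hlc⟩ := vlm_smul hu hv
    have he2 : (↑(toLex ((a i).natDegree + (ofLex m').1, (ofLex m').2))
        : WithBot (Lex (ℕ × Fin 2))) = (↑(toLex (D, pos)) : WithBot (Lex (ℕ × Fin 2))) := by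
      rw [← hlm, heq, hmf]
    have he3 := toLex.injective (WithBot.coe_inj.1 he2)
    have hDeq : (a i).natDegree + (ofLex m').1 = D := (Prod.ext_iff.1 he3).1
    have hposeq : (ofLex m').2 = pos := (Prod.ext_iff.1 he3).2
    constructor
    · rw [(vlm_spec hv).2.2.1, hposeq, (vlm_spec hmf).2.2.1]
    · have hsp := vlm_spec (heq.trans hmf)
      have h1 : (a i * v i pos).coeff D = vlc (a i • v i) := by
        rw [hsp.2.2.2]; rfl
      rw [h1, hlc, (vlm_spec hv).2.2.2, hposeq]
  have hcoeff : vlc f = ∑ i, (a i * v i pos).coeff D := by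
    rw [(vlm_spec hmf).2.2.2, hfeq]
    simp [Finset.sum_apply, Polynomial.finset_sum_coeff]
  have hunit : IsUnit (vlc f) := (zmod_card_zmultiples_eq_iff hp hr _).1 hford
  have hex : ∃ i, a i ≠ 0 ∧ vlm (a i • v i) = vlm f ∧ IsUnit (vlc (v i)) := by
    by_contra hcon
    push_neg at hcon
    have hdvd : ∀ i : Fin (2 * r), (p : ZMod (p ^ r)) ∣ (a i * v i pos).coeff D := by
      intro i
      by_cases hai : a i = 0
      · simp [hai]
      by_cases heq : vlm (a i • v i) = vlm f
      · obtain ⟨-, hc⟩ := hmax i hai heq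
        rw [hc]
        exact Dvd.dvd.mul_left (zmod_dvd_of_not_isUnit hp hr (hcon i hai heq)) _
      · have hle : vlm (a i • v i) ≤ vlm f :=
          hS ▸ Finset.le_sup (f := fun i => vlm (a i • v i))
            (by simp [hai])
        have hlt : vlm (a i • v i) < (↑(toLex (D, pos)) : WithBot (Lex (ℕ × Fin 2))) :=
          hmf ▸ lt_of_le_of_ne hle heq
        have hz : ((a i • v i) pos).coeff D = 0 := coeff_eq_zero_of_vlm_lt hlt
        have hz' : (a i * v i pos).coeff D = 0 := hz
        rw [hz']
        exact dvd_zero _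
    have hdf : (p : ZMod (p ^ r)) ∣ vlc f := hcoeff ▸ Finset.dvd_sum fun i _ => hdvd i
    exact zmod_not_isUnit_p hp hr (isUnit_of_dvd_unit hdf hunit)
  obtain ⟨i, hai, hieq, hiu⟩ := hex
  have hij : i = jstar := by
    by_contra hne
    exact hdist i jstar hne ((hmax i hai hieq).1.trans (hfpos.trans hjpos.symm))
      (by rw [(zmod_card_zmultiples_eq_iff hp hr _).2 hiu, hjord])
  subst hij
  exact ⟨a, hadig, hfeq, hai, hieq.symm, fun j hj =>
    hS ▸ Finset.le_sup (f := fun i => vlm (a i • v i))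
      (by simp [hj])⟩

end Key

/-- Let `M ⊆ Z_{p^r}[x]^2` be the p-span of `(v_1,…,v_{2r})` having the p-PLM property, with
pairwise distinct (leading position, order) pairs, and `j⋆` the index with `lpos v_{j⋆} = 2`
and `ord v_{j⋆} = r`. Then `v_{j⋆}` has minimal leading monomial among all vectors of `M` of
order `r` and leading position 2, and every such minimal vector `f` has the form
`f = a v_{j⋆} + ∑_{i ≠ j⋆} a_i v_i` with `a` a nonzero digit and `a_i ∈ A_p[x]` with
`lm (a_i v_i) ≤ lm (v_{j⋆})`. -/
theorem ring_minimal_lpos_two_param (p r : ℕ) (hp : p.Prime) (hr : 0 < r)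
    (v : Fin (2 * r) → Fin 2 → Polynomial (ZMod (p ^ r)))
    (hPLM : HasPPLM p v)
    (hdist : ∀ i j, i ≠ j → vlpos (v i) = vlpos (v j) →
      Nat.card (AddSubgroup.zmultiples (vlc (v i))) ≠
        Nat.card (AddSubgroup.zmultiples (vlc (v j))))
    (jstar : Fin (2 * r))
    (hjpos : vlpos (v jstar) = ((1 : Fin 2) : WithBot (Fin 2)))
    (hjord : Nat.card (AddSubgroup.zmultiples (vlc (v jstar))) = p ^ r) :
    (∀ f ∈ pSpan p v, f ≠ 0 → vlpos f = ((1 : Fin 2) : WithBot (Fin 2)) →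
        Nat.card (AddSubgroup.zmultiples (vlc f)) = p ^ r → vlm (v jstar) ≤ vlm f) ∧
    (∀ f ∈ pSpan p v, f ≠ 0 → vlpos f = ((1 : Fin 2) : WithBot (Fin 2)) →
      Nat.card (AddSubgroup.zmultiples (vlc f)) = p ^ r →
      (∀ f' ∈ pSpan p v, f' ≠ 0 → vlpos f' = ((1 : Fin 2) : WithBot (Fin 2)) →
        Nat.card (AddSubgroup.zmultiples (vlc f')) = p ^ r → vlm f ≤ vlm f') →
      ∃ (a : ZMod (p ^ r)) (b : Fin (2 * r) → Polynomial (ZMod (p ^ r))),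
        IsDigit p a ∧ a ≠ 0 ∧ (∀ i, IsDigitPoly p (b i)) ∧
        (∀ i, i ≠ jstar → vlm (b i • v i) ≤ vlm (v jstar)) ∧
        f = (C a) • v jstar + ∑ i ∈ Finset.univ.filter (· ≠ jstar), b i • v i) := by
  have hvj0 : v jstar ≠ 0 := by
    intro h
    rw [vlpos, vlm_eq_bot.2 h] at hjpos
    simp at hjpos
  have hvjne : vlm (v jstar) ≠ ⊥ := fun h => hvj0 (vlm_eq_bot.1 h)
  obtain ⟨mj, hmj⟩ := WithBot.ne_bot_iff_exists.1 hvjne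
  have hvj : vlm (v jstar) = (↑(toLex ((ofLex mj).1, (ofLex mj).2))
      : WithBot (Lex (ℕ × Fin 2))) := hmj.symm
  have part1 : ∀ f ∈ pSpan p v, f ≠ 0 → vlpos f = ((1 : Fin 2) : WithBot (Fin 2)) →
      Nat.card (AddSubgroup.zmultiples (vlc f)) = p ^ r → vlm (v jstar) ≤ vlm f := by
    intro f hf hf0 hfpos hford
    obtain ⟨a, hadig, hfeq, haj, hlmeq, hbound⟩ :=
      key_decomp p r hp hr v hPLM hdist jstar hjpos hjord f hf hf0 hfpos hford
    have hu := isUnit_leadingCoeff_of_digitPoly hp hr (hadig jstar) haj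
    obtain ⟨hlm, -⟩ := vlm_smul hu hvj
    rw [hlmeq, hlm, hvj, WithBot.coe_le_coe, Prod.Lex.toLex_le_toLex]
    rcases Nat.eq_zero_or_pos (a jstar).natDegree with h | h
    · exact Or.inr ⟨by omega, le_refl _⟩
    · exact Or.inl (by omega)
  refine ⟨part1, ?_⟩
  intro f hf hf0 hfpos hford hmin
  have hvmem : v jstar ∈ pSpan p v := by
    refine ⟨fun i => if i = jstar then 1 else 0, ?_, ?_⟩
    · intro i n
      by_cases h : i = jstar
      · by_cases hn : n = 0
        · exact ⟨1, hp.one_lt, by simp [h, hn]⟩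
        · exact ⟨0, hp.pos, by simp [h, Polynomial.coeff_one, hn]⟩
      · exact ⟨0, hp.pos, by simp [h]⟩
    · simp [ite_smul]
  have hflm : vlm f = vlm (v jstar) :=
    le_antisymm (hmin (v jstar) hvmem hvj0 hjpos hjord) (part1 f hf hf0 hfpos hford)
  obtain ⟨a, hadig, hfeq, haj, hlmeq, hbound⟩ :=
    key_decomp p r hp hr v hPLM hdist jstar hjpos hjord f hf hf0 hfpos hford
  have hu := isUnit_leadingCoeff_of_digitPoly hp hr (hadig jstar) haj
  obtain ⟨hlm, -⟩ := vlm_smul hu hvj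
  have hdeg : (a jstar).natDegree = 0 := by
    have h1 : (↑(toLex ((a jstar).natDegree + (ofLex mj).1, (ofLex mj).2))
        : WithBot (Lex (ℕ × Fin 2))) = (↑(toLex ((ofLex mj).1, (ofLex mj).2))
        : WithBot (Lex (ℕ × Fin 2))) := by
      rw [← hlm, ← hvj, ← hlmeq, hflm]
    have h2 := (Prod.ext_iff.1 (toLex.injective (WithBot.coe_inj.1 h1))).1
    omega
  obtain ⟨c, hc⟩ := Polynomial.natDegree_eq_zero.1 hdeg
  have hc0 : c ≠ 0 := by
    rintro rfl
    rw [map_zero] at hc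
    exact haj hc.symm
  have hcd : IsDigit p c := by
    have h := hadig jstar 0
    rw [← hc, Polynomial.coeff_C_zero] at h
    exact h
  refine ⟨c, fun i => if i = jstar then 0 else a i, hcd, hc0, ?_, ?_, ?_⟩
  · intro i n
    by_cases h : i = jstar
    · simp only [h, if_pos]
      exact ⟨0, hp.pos, by simp⟩
    · simp only [if_neg h]
      exact hadig i n
  · intro i hi
    simp only [if_neg hi]
    by_cases hai : a i = 0
    · rw [hai, zero_smul]
      rw [show vlm (0 : Fin 2 → Polynomial (ZMod (p ^ r))) = ⊥ from vlm_eq_bot.2 rfl]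
      exact bot_le
    · exact le_of_le_of_eq (hbound i hai) hflm
  · have herase : ∑ i ∈ Finset.univ.filter (· ≠ jstar),
        (if i = jstar then 0 else a i) • v i
        = ∑ i ∈ Finset.univ.filter (· ≠ jstar), a i • v i :=
      Finset.sum_congr rfl fun i hi => by
        rw [if_neg (Finset.mem_filter.1 hi).2]
    rw [herase, hc, hfeq]
    rw [show Finset.univ.filter (· ≠ jstar) = Finset.univ.erase jstar by
      ext x; simp [Finset.mem_filter, Finset.mem_erase, and_comm]]
    exact (Finset.add_sum_erase Finset.univ (fun i => a i • v i)
      (Finset.mem_univ jstar)).symm
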